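/- Let H be a Q-graded Hopf quasigroup that is commutative (i.e. Q is a commutative quasigroup and hg = gh for all h ∈ H_p, g ∈ H_q). Then S_{p^{-1}}(S_p(h)) = h for all p ∈ Q, h ∈ H_p. -/

import Mathlib

open TensorProduct

universe u v w

/-- A quasigroup: a set with product, identity `e`, and two-sided inverses satisfying
`p⁻¹(pq) = q` and `(qp)p⁻¹ = q`. -/
structure QuasigroupStruct (Q : Type u) where
  mul : Q → Q → Q
  one : Q
  inv : Q → Q
  mul_one : ∀ p, mul p one = p
  one_mul : ∀ p, mul one p = p
  inv_mul_cancel : ∀ p q, mul (inv p) (mul p q) = q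
  mul_inv_cancel : ∀ p q, mul (mul q p) (inv p) = q

namespace QuasigroupStruct

variable {Q : Type u} (G : QuasigroupStruct Q)

lemma inv_mul_self (p : Q) : G.mul (G.inv p) p = G.one := by
  have h := G.inv_mul_cancel p G.one
  rwa [G.mul_one] at h

lemma mul_inv_self (p : Q) : G.mul p (G.inv p) = G.one := by
  have h := G.mul_inv_cancel p G.one
  rwa [G.one_mul] at h

lemma inv_inv (p : Q) : G.inv (G.inv p) = p := by
  have h := G.inv_mul_cancel (G.inv p) p
  rw [G.inv_mul_self p] at h
  rwa [G.mul_one] at h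

lemma mul_inv_cancel_left (p q : Q) : G.mul p (G.mul (G.inv p) q) = q := by
  have h := G.inv_mul_cancel (G.inv p) q
  rwa [G.inv_inv] at h

lemma inv_mul_cancel_right (p q : Q) : G.mul (G.mul q (G.inv p)) p = q := by
  have h := G.mul_inv_cancel (G.inv p) q
  rwa [G.inv_inv] at h

lemma mul_inv_rev (p q : Q) : G.inv (G.mul p q) = G.mul (G.inv q) (G.inv p) := by
  have h1 : G.mul q (G.inv (G.mul p q)) = G.inv p := by
    have h := G.mul_inv_cancel (G.mul p q) (G.inv p)
    rwa [G.inv_mul_cancel p q] at h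
  calc G.inv (G.mul p q)
      = G.mul (G.inv q) (G.mul q (G.inv (G.mul p q))) := (G.inv_mul_cancel q _).symm
    _ = G.mul (G.inv q) (G.inv p) := by rw [h1]

lemma inv_one : G.inv G.one = G.one := by
  have h := G.inv_mul_cancel G.one G.one
  rwa [G.one_mul, G.mul_one] at h

end QuasigroupStruct

/-- Transport along an equality of grades, as a linear map. -/
def gcl {Q : Type u} {H : Q → Type w} {k : Type v} [CommSemiring k]
    [∀ p, AddCommMonoid (H p)] [∀ p, Module k (H p)] {p q : Q} (e : p = q) :
    H p →ₗ[k] H q := by subst e; exact LinearMap.id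

/-- A `Q`-graded Hopf quasigroup: a family of coassociative counital coalgebras `H p`
with a (not necessarily associative) graded multiplication, unit and antipode family,
such that the multiplications and the unit are coalgebra maps and the antipode
satisfies the Hopf quasigroup axioms. -/
structure GradedHopfQuasigroup (k : Type v) [CommRing k] {Q : Type u} (G : QuasigroupStruct Q)
    (H : Q → Type w) [∀ p, AddCommGroup (H p)] [∀ p, Module k (H p)]
    [∀ p, Coalgebra k (H p)] where
  mul : ∀ p q, H p →ₗ[k] H q →ₗ[k] H (G.mul p q)
  one : H G.one
  antipode : ∀ p, H p →ₗ[k] H (G.inv p)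
  mul_one' : ∀ (p : Q) (h : H p), gcl (k := k) (G.mul_one p) ((mul p G.one h) one) = h
  one_mul' : ∀ (p : Q) (h : H p), gcl (k := k) (G.one_mul p) ((mul G.one p one) h) = h
  comul_mul : ∀ (p q : Q) (h : H p) (g : H q),
    Coalgebra.comul (R := k) ((mul p q h) g) =
      (TensorProduct.map (TensorProduct.lift (mul p q)) (TensorProduct.lift (mul p q)))
        ((TensorProduct.tensorTensorTensorComm k (H p) (H p) (H q) (H q))
          (Coalgebra.comul h ⊗ₜ[k] Coalgebra.comul g))
  counit_mul : ∀ (p q : Q) (h : H p) (g : H q),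
    Coalgebra.counit (R := k) ((mul p q h) g) =
      Coalgebra.counit (R := k) h * Coalgebra.counit (R := k) g
  comul_one : Coalgebra.comul (R := k) one = one ⊗ₜ[k] one
  counit_one : Coalgebra.counit (R := k) one = 1
  /-- `S (h₁) (h₂ g) = ε(h) g` -/
  antipode_mul_left : ∀ (p q : Q) (h : H p) (g : H q),
    TensorProduct.lift
      (((mul (G.inv p) (G.mul p q)).comp (antipode p)).compl₂ ((mul p q).flip g))
      (Coalgebra.comul h)
      = gcl (k := k) (G.inv_mul_cancel p q).symm (Coalgebra.counit (R := k) h • g)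
  /-- `h₁ (S (h₂) g) = ε(h) g` -/
  antipode_mul_left' : ∀ (p q : Q) (h : H p) (g : H q),
    TensorProduct.lift
      ((mul p (G.mul (G.inv p) q)).compl₂ (((mul (G.inv p) q).flip g).comp (antipode p)))
      (Coalgebra.comul h)
      = gcl (k := k) (G.mul_inv_cancel_left p q).symm (Coalgebra.counit (R := k) h • g)
  /-- `(g S (h₁)) h₂ = ε(h) g` -/
  antipode_mul_right : ∀ (p q : Q) (h : H p) (g : H q),
    TensorProduct.lift
      ((mul (G.mul q (G.inv p)) p).comp ((mul q (G.inv p) g).comp (antipode p)))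
      (Coalgebra.comul h)
      = gcl (k := k) (G.inv_mul_cancel_right p q).symm (Coalgebra.counit (R := k) h • g)
  /-- `(g h₁) S (h₂) = ε(h) g` -/
  antipode_mul_right' : ∀ (p q : Q) (h : H p) (g : H q),
    TensorProduct.lift
      (((mul (G.mul q p) (G.inv p)).comp (mul q p g)).compl₂ (antipode p))
      (Coalgebra.comul h)
      = gcl (k := k) (G.mul_inv_cancel p q).symm (Coalgebra.counit (R := k) h • g)

variable {k : Type v} [Field k] {Q : Type u} {G : QuasigroupStruct Q}
  {H : Q → Type w} [∀ p, AddCommGroup (H p)] [∀ p, Module k (H p)]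
  [∀ p, Coalgebra k (H p)]


section Aux

open DirectSum Coalgebra LinearMap

attribute [local instance] Classical.decEq
set_option linter.unusedSectionVars false

variable {k : Type v} [Field k] {Q : Type u} {G : QuasigroupStruct Q}
  {H : Q → Type w} [∀ p, AddCommGroup (H p)] [∀ p, Module k (H p)]
  [∀ p, Coalgebra k (H p)]

/-- Inclusion of a graded piece into the direct sum. -/
noncomputable def iT (p : Q) : H p →ₗ[k] ⨁ p, H p := DirectSum.lof k Q H p

lemma iT_gcl {a b : Q} (e : a = b) (x : H a) :
    iT (H := H) (k := k) b (gcl (k := k) e x) = iT (k := k) a x := by subst e; rfl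

lemma iT_inj {p : Q} {x y : H p} (hxy : iT (k := k) p x = iT (k := k) p y) : x = y := by
  have := congrArg (fun z : ⨁ p, H p => z p) hxy
  simpa [iT, DirectSum.lof_apply] using this

variable (A : GradedHopfQuasigroup k G H)

/-- The multiplication, as a bilinear map on the direct sum. -/
noncomputable def MT : (⨁ p, H p) →ₗ[k] (⨁ p, H p) →ₗ[k] ⨁ p, H p :=
  DirectSum.toModule k Q _ (fun p =>
    (DirectSum.toModule k Q (H p →ₗ[k] ⨁ p, H p)
      (fun q => ((A.mul p q).compr₂ (iT (G.mul p q))).flip)).flip)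

/-- The antipode on the direct sum. -/
noncomputable def SST : (⨁ p, H p) →ₗ[k] ⨁ p, H p :=
  DirectSum.toModule k Q _ (fun p => (iT (G.inv p)).comp (A.antipode p))

/-- The unit of the direct sum. -/
noncomputable def oneT : ⨁ p, H p := iT (k := k) G.one A.one

@[simp] lemma MT_iT (p q : Q) (h : H p) (g : H q) :
    MT A (iT (k := k) p h) (iT (k := k) q g) = iT (k := k) (G.mul p q) (A.mul p q h g) := by
  simp [MT, iT, DirectSum.toModule_lof]

@[simp] lemma SST_iT (p : Q) (h : H p) :
    SST A (iT (k := k) (H := H) p h) = iT (k := k) (G.inv p) (A.antipode p h) := by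
  simp [SST, iT, DirectSum.toModule_lof]

lemma MT_oneT (p : Q) (h : H p) : MT A (iT (k := k) p h) (oneT (k := k) A) = iT (k := k) p h := by
  rw [oneT, MT_iT, ← iT_gcl (G.mul_one p) (A.mul p G.one h A.one), A.mul_one']

lemma oneT_MT (p : Q) (h : H p) : MT A (oneT (k := k) A) (iT (k := k) p h) = iT (k := k) p h := by
  rw [oneT, MT_iT, ← iT_gcl (G.one_mul p) (A.mul G.one p A.one h), A.one_mul']

lemma sum_counit_smul_right {p : Q} (h : H p) {ι : Type*} (r : Coalgebra.Repr k h ι) :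
    ∑ i ∈ r.index, Coalgebra.counit (R := k) (r.left i) • r.right i = h := by
  have key := congrArg (TensorProduct.lid k (H p)) (Coalgebra.sum_counit_tmul_eq r)
  rw [map_sum] at key
  simp only [TensorProduct.lid_tmul] at key
  simpa using key

lemma sum_counit_smul_left {p : Q} (h : H p) {ι : Type*} (r : Coalgebra.Repr k h ι) :
    ∑ i ∈ r.index, Coalgebra.counit (R := k) (r.right i) • r.left i = h := by
  have key := congrArg (TensorProduct.rid k (H p)) (Coalgebra.sum_tmul_counit_eq r)
  rw [map_sum] at key
  simp only [TensorProduct.rid_tmul] at key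
  simpa using key

/-- `∑ S(h₁) (h₂ g) = ε(h) g` in the direct sum. -/
lemma Ax1T (p q : Q) (h : H p) (g : H q) {ι : Type*} (r : Coalgebra.Repr k h ι) :
    ∑ i ∈ r.index, MT A (SST A (iT (k := k) p (r.left i)))
        (MT A (iT (k := k) p (r.right i)) (iT (k := k) q g))
      = Coalgebra.counit (R := k) h • iT (k := k) q g := by
  have ax := A.antipode_mul_left p q h g
  rw [← r.eq, map_sum] at ax
  simp only [TensorProduct.lift.tmul, LinearMap.compl₂_apply, LinearMap.comp_apply,
    LinearMap.flip_apply] at ax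
  calc ∑ i ∈ r.index, MT A (SST A (iT (k := k) p (r.left i)))
        (MT A (iT (k := k) p (r.right i)) (iT (k := k) q g))
      = iT (k := k) (G.mul (G.inv p) (G.mul p q)) (∑ i ∈ r.index,
          A.mul (G.inv p) (G.mul p q) (A.antipode p (r.left i)) (A.mul p q (r.right i) g)) := by
        rw [map_sum]; simp
    _ = Coalgebra.counit (R := k) h • iT (k := k) q g := by
        rw [ax, iT_gcl, map_smul]

/-- `∑ h₁ (S(h₂) g) = ε(h) g` in the direct sum. -/
lemma Ax2T (p q : Q) (h : H p) (g : H q) {ι : Type*} (r : Coalgebra.Repr k h ι) :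
    ∑ i ∈ r.index, MT A (iT (k := k) p (r.left i))
        (MT A (SST A (iT (k := k) p (r.right i))) (iT (k := k) q g))
      = Coalgebra.counit (R := k) h • iT (k := k) q g := by
  have ax := A.antipode_mul_left' p q h g
  rw [← r.eq, map_sum] at ax
  simp only [TensorProduct.lift.tmul, LinearMap.compl₂_apply, LinearMap.comp_apply,
    LinearMap.flip_apply] at ax
  calc ∑ i ∈ r.index, MT A (iT (k := k) p (r.left i))
        (MT A (SST A (iT (k := k) p (r.right i))) (iT (k := k) q g))
      = iT (k := k) (G.mul p (G.mul (G.inv p) q)) (∑ i ∈ r.index,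
          A.mul p (G.mul (G.inv p) q) (r.left i) (A.mul (G.inv p) q (A.antipode p (r.right i)) g)) := by
        rw [map_sum]; simp
    _ = Coalgebra.counit (R := k) h • iT (k := k) q g := by
        rw [ax, iT_gcl, map_smul]

/-- `∑ (g h₁) S(h₂) = ε(h) g` in the direct sum. -/
lemma Ax4T (p q : Q) (h : H p) (g : H q) {ι : Type*} (r : Coalgebra.Repr k h ι) :
    ∑ i ∈ r.index, MT A (MT A (iT (k := k) q g) (iT (k := k) p (r.left i)))
        (SST A (iT (k := k) p (r.right i)))
      = Coalgebra.counit (R := k) h • iT (k := k) q g := by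
  have ax := A.antipode_mul_right' p q h g
  rw [← r.eq, map_sum] at ax
  simp only [TensorProduct.lift.tmul, LinearMap.compl₂_apply, LinearMap.comp_apply,
    LinearMap.flip_apply] at ax
  calc ∑ i ∈ r.index, MT A (MT A (iT (k := k) q g) (iT (k := k) p (r.left i)))
        (SST A (iT (k := k) p (r.right i)))
      = iT (k := k) (G.mul (G.mul q p) (G.inv p)) (∑ i ∈ r.index,
          A.mul (G.mul q p) (G.inv p) (A.mul q p g (r.left i)) (A.antipode p (r.right i))) := by
        rw [map_sum]; simp
    _ = Coalgebra.counit (R := k) h • iT (k := k) q g := by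
        rw [ax, iT_gcl, map_smul]

/-- `Ax1T` for an arbitrary element of the direct sum. -/
lemma Ax1T' (p : Q) (h : H p) {ι : Type*} (r : Coalgebra.Repr k h ι) (y : ⨁ p, H p) :
    ∑ i ∈ r.index, MT A (SST A (iT (k := k) p (r.left i)))
        (MT A (iT (k := k) p (r.right i)) y)
      = Coalgebra.counit (R := k) h • y := by
  induction y using DirectSum.induction_on with
  | zero => simp
  | of q g =>
    rw [← DirectSum.lof_eq_of k]
    exact Ax1T A p q h g r
  | add x y hx hy =>
    simp only [map_add, LinearMap.add_apply, smul_add, Finset.sum_add_distrib, hx, hy]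

/-- `Ax2T` for an arbitrary element of the direct sum. -/
lemma Ax2T' (p : Q) (h : H p) {ι : Type*} (r : Coalgebra.Repr k h ι) (y : ⨁ p, H p) :
    ∑ i ∈ r.index, MT A (iT (k := k) p (r.left i))
        (MT A (SST A (iT (k := k) p (r.right i))) y)
      = Coalgebra.counit (R := k) h • y := by
  induction y using DirectSum.induction_on with
  | zero => simp
  | of q g =>
    rw [← DirectSum.lof_eq_of k]
    exact Ax2T A p q h g r
  | add x y hx hy =>
    simp only [map_add, LinearMap.add_apply, smul_add, Finset.sum_add_distrib, hx, hy]

/-- A representation of the comultiplication of a product, built from representations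
of the factors. -/
noncomputable def mulRepr (p q : Q) (h : H p) (g : H q)
    {ι κ : Type*} (rh : Coalgebra.Repr k h ι) (rg : Coalgebra.Repr k g κ) :
    Coalgebra.Repr k (A.mul p q h g) (ι × κ) where
  index := rh.index ×ˢ rg.index
  left := fun ij => A.mul p q (rh.left ij.1) (rg.left ij.2)
  right := fun ij => A.mul p q (rh.right ij.1) (rg.right ij.2)
  eq := by
    rw [A.comul_mul, ← rh.eq, ← rg.eq]
    rw [TensorProduct.sum_tmul]
    simp only [TensorProduct.tmul_sum, map_sum, TensorProduct.tensorTensorTensorComm_tmul,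
      TensorProduct.map_tmul, TensorProduct.lift.tmul]
    rw [Finset.sum_product]

/-- Coassociativity exchange rule for two-level Sweedler sums. -/
lemma exchangeT {p : Q} (h : H p) {V : Type (max u w)} [AddCommGroup V] [Module k V]
    (φ : H p →ₗ[k] H p →ₗ[k] H p →ₗ[k] V)
    {ι κ Λ : Type*}
    (r : Coalgebra.Repr k h ι) (r1 : ∀ i : ι, Coalgebra.Repr k (r.left i) κ)
    (r2 : ∀ i : ι, Coalgebra.Repr k (r.right i) Λ) :
    ∑ i ∈ r.index, ∑ j ∈ (r1 i).index,
        φ ((r1 i).left j) ((r1 i).right j) (r.right i)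
      = ∑ i ∈ r.index, ∑ j ∈ (r2 i).index,
        φ (r.left i) ((r2 i).left j) ((r2 i).right j) := by
  have key := Coalgebra.sum_tmul_tmul_eq r r1 r2
  let L : H p ⊗[k] (H p ⊗[k] H p) →ₗ[k] V :=
    TensorProduct.lift ((TensorProduct.lift.equiv (RingHom.id k) (H p) (H p) V).toLinearMap.comp φ)
  have key2 := congrArg L key
  simp only [map_sum] at key2
  simpa only [L, TensorProduct.lift.tmul, LinearMap.coe_comp, Function.comp_apply,
    LinearEquiv.coe_coe, TensorProduct.lift.equiv_apply] using key2

/-- Restrict a trilinear map on the direct sum to a graded piece. -/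
noncomputable def triT {V : Type (max u w)} [AddCommGroup V] [Module k V]
    (F : (⨁ p, H p) →ₗ[k] (⨁ p, H p) →ₗ[k] (⨁ p, H p) →ₗ[k] V) (p : Q) :
    H p →ₗ[k] H p →ₗ[k] H p →ₗ[k] V :=
  ((F.comp (iT (k := k) p)).compl₂ (iT (k := k) p)).compr₂ (LinearMap.lcomp k V (iT (k := k) p))

@[simp] lemma triT_apply {V : Type (max u w)} [AddCommGroup V] [Module k V]
    (F : (⨁ p, H p) →ₗ[k] (⨁ p, H p) →ₗ[k] (⨁ p, H p) →ₗ[k] V) (p : Q) (a b c : H p) :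
    triT F p a b c = F (iT (k := k) p a) (iT (k := k) p b) (iT (k := k) p c) := by
  simp [triT]

lemma commT (hQ : ∀ p q, G.mul p q = G.mul q p)
    (hH : ∀ (p q : Q) (h : H p) (g : H q),
      gcl (k := k) (hQ p q) ((A.mul p q h) g) = (A.mul q p g) h)
    (p q : Q) (h : H p) (g : H q) :
    MT A (iT (k := k) p h) (iT (k := k) q g) = MT A (iT (k := k) q g) (iT (k := k) p h) := by
  rw [MT_iT, MT_iT, ← hH p q h g, iT_gcl]

/-- `∑ g₁ S(h g₂) = ε(g) S(h)` in the direct sum. -/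
lemma BprimeT (p q : Q) (h : H p) (g : H q) {ι : Type*} (rg : Coalgebra.Repr k g ι) :
    ∑ m ∈ rg.index, MT A (iT (k := k) q (rg.left m))
        (SST A (MT A (iT (k := k) p h) (iT (k := k) q (rg.right m))))
      = Coalgebra.counit (R := k) g • SST A (iT (k := k) p h) := by
  classical
  obtain ⟨rh⟩ : Nonempty (Coalgebra.Repr k h (H p × H p)) := ⟨Coalgebra.Repr.arbitrary k h⟩
  obtain ⟨r1⟩ : Nonempty (∀ i : (H p × H p), Coalgebra.Repr k (rh.left i) (H p × H p)) :=
    ⟨fun i => Coalgebra.Repr.arbitrary k _⟩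
  obtain ⟨r2⟩ : Nonempty (∀ i : (H p × H p), Coalgebra.Repr k (rh.right i) (H p × H p)) :=
    ⟨fun i => Coalgebra.Repr.arbitrary k _⟩
  set F : (⨁ p, H p) →ₗ[k] (⨁ p, H p) →ₗ[k] (⨁ p, H p) →ₗ[k] ⨁ p, H p :=
    ∑ m ∈ rg.index,
      ((((MT A).comp (SST A)).compl₂ ((MT A).flip (iT (k := k) q (rg.left m)))).compr₂
        ((LinearMap.lcomp k _ ((SST A).comp ((MT A).flip (iT (k := k) q (rg.right m))))).comp
          (MT A))) with hF
  have hφ : ∀ a b c : H p, triT F p a b c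
      = ∑ m ∈ rg.index,
          MT A (MT A (SST A (iT (k := k) p a)) (MT A (iT (k := k) p b) (iT (k := k) q (rg.left m))))
            (SST A (MT A (iT (k := k) p c) (iT (k := k) q (rg.right m)))) := by
    intro a b c
    rw [triT_apply, hF]
    simp [LinearMap.sum_apply, LinearMap.compr₂_apply, LinearMap.compl₂_apply,
      LinearMap.lcomp_apply, LinearMap.comp_apply, LinearMap.flip_apply]
  have key := exchangeT (k := k) h (triT F p) rh r1 r2
  have stepA : ∑ i ∈ rh.index, ∑ j ∈ (r2 i).index,
      triT F p (rh.left i) ((r2 i).left j) ((r2 i).right j)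
      = Coalgebra.counit (R := k) g • SST A (iT (k := k) p h) := by
    have inner : ∀ i ∈ rh.index, ∑ j ∈ (r2 i).index,
        triT F p (rh.left i) ((r2 i).left j) ((r2 i).right j)
        = (Coalgebra.counit (R := k) (rh.right i) * Coalgebra.counit (R := k) g)
            • SST A (iT (k := k) p (rh.left i)) := by
      intro i _
      have ax := Ax4T A (G.mul p q) (G.inv p) (A.mul p q (rh.right i) g)
        (A.antipode p (rh.left i)) (mulRepr A p q (rh.right i) g (r2 i) rg)
      rw [A.counit_mul] at ax
      calc ∑ j ∈ (r2 i).index, triT F p (rh.left i) ((r2 i).left j) ((r2 i).right j)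
          = ∑ x ∈ (r2 i).index ×ˢ rg.index,
              MT A (MT A (iT (k := k) (G.inv p) (A.antipode p (rh.left i)))
                (iT (k := k) (G.mul p q) (A.mul p q ((r2 i).left x.1) (rg.left x.2))))
                (SST A (iT (k := k) (G.mul p q) (A.mul p q ((r2 i).right x.1) (rg.right x.2)))) := by
            rw [Finset.sum_product]
            refine Finset.sum_congr rfl fun j _ => ?_
            rw [hφ]
            refine Finset.sum_congr rfl fun m _ => ?_
            simp only [MT_iT, SST_iT]
        _ = (Coalgebra.counit (R := k) (rh.right i) * Coalgebra.counit (R := k) g)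
              • iT (k := k) (G.inv p) (A.antipode p (rh.left i)) := ax
        _ = (Coalgebra.counit (R := k) (rh.right i) * Coalgebra.counit (R := k) g)
              • SST A (iT (k := k) p (rh.left i)) := by rw [SST_iT]
    calc ∑ i ∈ rh.index, ∑ j ∈ (r2 i).index,
        triT F p (rh.left i) ((r2 i).left j) ((r2 i).right j)
        = ∑ i ∈ rh.index, (Coalgebra.counit (R := k) (rh.right i)
            * Coalgebra.counit (R := k) g) • SST A (iT (k := k) p (rh.left i)) :=
          Finset.sum_congr rfl inner
      _ = Coalgebra.counit (R := k) g • SST A (iT (k := k) p (∑ i ∈ rh.index,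
            Coalgebra.counit (R := k) (rh.right i) • rh.left i)) := by
          rw [map_sum, map_sum, Finset.smul_sum]
          refine Finset.sum_congr rfl fun i _ => ?_
          rw [map_smul, map_smul, smul_smul, mul_comm]
      _ = Coalgebra.counit (R := k) g • SST A (iT (k := k) p h) := by
          rw [sum_counit_smul_left h rh]
  have hsum : iT (k := k) p h = ∑ i ∈ rh.index,
      Coalgebra.counit (R := k) (rh.left i) • iT (k := k) p (rh.right i) := by
    conv_lhs => rw [← sum_counit_smul_right h rh]
    rw [map_sum]
    exact Finset.sum_congr rfl fun i _ => by rw [map_smul]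
  have stepB : ∑ i ∈ rh.index, ∑ j ∈ (r1 i).index,
      triT F p ((r1 i).left j) ((r1 i).right j) (rh.right i)
      = ∑ m ∈ rg.index, MT A (iT (k := k) q (rg.left m))
          (SST A (MT A (iT (k := k) p h) (iT (k := k) q (rg.right m)))) := by
    have e1 : ∀ i ∈ rh.index, ∑ j ∈ (r1 i).index,
        triT F p ((r1 i).left j) ((r1 i).right j) (rh.right i)
        = ∑ m ∈ rg.index, Coalgebra.counit (R := k) (rh.left i) •
            MT A (iT (k := k) q (rg.left m))
              (SST A (MT A (iT (k := k) p (rh.right i)) (iT (k := k) q (rg.right m)))) := by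
      intro i _
      calc ∑ j ∈ (r1 i).index, triT F p ((r1 i).left j) ((r1 i).right j) (rh.right i)
          = ∑ j ∈ (r1 i).index, ∑ m ∈ rg.index,
              MT A (MT A (SST A (iT (k := k) p ((r1 i).left j)))
                (MT A (iT (k := k) p ((r1 i).right j)) (iT (k := k) q (rg.left m))))
                (SST A (MT A (iT (k := k) p (rh.right i)) (iT (k := k) q (rg.right m)))) :=
            Finset.sum_congr rfl fun j _ => hφ _ _ _
        _ = ∑ m ∈ rg.index, ∑ j ∈ (r1 i).index,
              MT A (MT A (SST A (iT (k := k) p ((r1 i).left j)))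
                (MT A (iT (k := k) p ((r1 i).right j)) (iT (k := k) q (rg.left m))))
                (SST A (MT A (iT (k := k) p (rh.right i)) (iT (k := k) q (rg.right m)))) :=
            Finset.sum_comm
        _ = ∑ m ∈ rg.index, Coalgebra.counit (R := k) (rh.left i) •
              MT A (iT (k := k) q (rg.left m))
                (SST A (MT A (iT (k := k) p (rh.right i)) (iT (k := k) q (rg.right m)))) := by
            refine Finset.sum_congr rfl fun m _ => ?_
            rw [← LinearMap.sum_apply, ← map_sum,
              Ax1T A p q (rh.left i) (rg.left m) (r1 i), map_smul, LinearMap.smul_apply]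
    calc ∑ i ∈ rh.index, ∑ j ∈ (r1 i).index,
        triT F p ((r1 i).left j) ((r1 i).right j) (rh.right i)
        = ∑ i ∈ rh.index, ∑ m ∈ rg.index, Coalgebra.counit (R := k) (rh.left i) •
            MT A (iT (k := k) q (rg.left m))
              (SST A (MT A (iT (k := k) p (rh.right i)) (iT (k := k) q (rg.right m)))) :=
          Finset.sum_congr rfl e1
      _ = ∑ m ∈ rg.index, ∑ i ∈ rh.index, Coalgebra.counit (R := k) (rh.left i) •
            MT A (iT (k := k) q (rg.left m))
              (SST A (MT A (iT (k := k) p (rh.right i)) (iT (k := k) q (rg.right m)))) :=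
          Finset.sum_comm
      _ = ∑ m ∈ rg.index, MT A (iT (k := k) q (rg.left m))
          (SST A (MT A (iT (k := k) p h) (iT (k := k) q (rg.right m)))) := by
          refine Finset.sum_congr rfl fun m _ => ?_
          rw [hsum]
          simp [map_sum, map_smul, LinearMap.sum_apply, LinearMap.smul_apply, Finset.smul_sum]
  rw [← stepB, key, stepA]

/-- The antipode is antimultiplicative: `S(hg) = S(g) S(h)` (in the direct sum). -/
lemma antimultT (p q : Q) (h : H p) (g : H q) :
    SST A (MT A (iT (k := k) p h) (iT (k := k) q g))
      = MT A (SST A (iT (k := k) q g)) (SST A (iT (k := k) p h)) := by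
  classical
  obtain ⟨rg⟩ : Nonempty (Coalgebra.Repr k g (H q × H q)) := ⟨Coalgebra.Repr.arbitrary k g⟩
  obtain ⟨r1⟩ : Nonempty (∀ i : (H q × H q), Coalgebra.Repr k (rg.left i) (H q × H q)) :=
    ⟨fun i => Coalgebra.Repr.arbitrary k _⟩
  obtain ⟨r2⟩ : Nonempty (∀ i : (H q × H q), Coalgebra.Repr k (rg.right i) (H q × H q)) :=
    ⟨fun i => Coalgebra.Repr.arbitrary k _⟩
  set γ : (⨁ p, H p) →ₗ[k] ⨁ p, H p := (SST A).comp (MT A (iT (k := k) p h)) with hγ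
  set F : (⨁ p, H p) →ₗ[k] (⨁ p, H p) →ₗ[k] (⨁ p, H p) →ₗ[k] ⨁ p, H p :=
    ((LinearMap.llcomp k _ _ _).comp ((MT A).comp (SST A))).compl₂
      ((LinearMap.lcomp k _ γ).comp (MT A)) with hF
  have hφ : ∀ a b c : H q, triT F q a b c
      = MT A (SST A (iT (k := k) q a))
          (MT A (iT (k := k) q b) (SST A (MT A (iT (k := k) p h) (iT (k := k) q c)))) := by
    intro a b c
    rw [triT_apply, hF]
    simp [hγ, LinearMap.llcomp_apply, LinearMap.lcomp_apply, LinearMap.compl₂_apply,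
      LinearMap.comp_apply]
  have key := exchangeT (k := k) g (triT F q) rg r1 r2
  have hgl : iT (k := k) q g = ∑ i ∈ rg.index,
      Coalgebra.counit (R := k) (rg.right i) • iT (k := k) q (rg.left i) := by
    conv_lhs => rw [← sum_counit_smul_left g rg]
    rw [map_sum]
    exact Finset.sum_congr rfl fun i _ => by rw [map_smul]
  have hgr : iT (k := k) q g = ∑ i ∈ rg.index,
      Coalgebra.counit (R := k) (rg.left i) • iT (k := k) q (rg.right i) := by
    conv_lhs => rw [← sum_counit_smul_right g rg]
    rw [map_sum]
    exact Finset.sum_congr rfl fun i _ => by rw [map_smul]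
  have stepA : ∑ i ∈ rg.index, ∑ j ∈ (r2 i).index,
      triT F q (rg.left i) ((r2 i).left j) ((r2 i).right j)
      = MT A (SST A (iT (k := k) q g)) (SST A (iT (k := k) p h)) := by
    have inner : ∀ i ∈ rg.index, ∑ j ∈ (r2 i).index,
        triT F q (rg.left i) ((r2 i).left j) ((r2 i).right j)
        = Coalgebra.counit (R := k) (rg.right i) •
            MT A (SST A (iT (k := k) q (rg.left i))) (SST A (iT (k := k) p h)) := by
      intro i _
      calc ∑ j ∈ (r2 i).index, triT F q (rg.left i) ((r2 i).left j) ((r2 i).right j)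
          = ∑ j ∈ (r2 i).index, MT A (SST A (iT (k := k) q (rg.left i)))
              (MT A (iT (k := k) q ((r2 i).left j))
                (SST A (MT A (iT (k := k) p h) (iT (k := k) q ((r2 i).right j))))) :=
            Finset.sum_congr rfl fun j _ => hφ _ _ _
        _ = MT A (SST A (iT (k := k) q (rg.left i))) (∑ j ∈ (r2 i).index,
              MT A (iT (k := k) q ((r2 i).left j))
                (SST A (MT A (iT (k := k) p h) (iT (k := k) q ((r2 i).right j))))) := by
            rw [map_sum]
        _ = Coalgebra.counit (R := k) (rg.right i) •
              MT A (SST A (iT (k := k) q (rg.left i))) (SST A (iT (k := k) p h)) := by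
            rw [BprimeT A p q h (rg.right i) (r2 i), map_smul]
    calc ∑ i ∈ rg.index, ∑ j ∈ (r2 i).index,
        triT F q (rg.left i) ((r2 i).left j) ((r2 i).right j)
        = ∑ i ∈ rg.index, Coalgebra.counit (R := k) (rg.right i) •
            MT A (SST A (iT (k := k) q (rg.left i))) (SST A (iT (k := k) p h)) :=
          Finset.sum_congr rfl inner
      _ = MT A (SST A (iT (k := k) q g)) (SST A (iT (k := k) p h)) := by
          rw [hgl]
          simp [map_sum, map_smul, LinearMap.sum_apply, LinearMap.smul_apply]
  have stepB : ∑ i ∈ rg.index, ∑ j ∈ (r1 i).index,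
      triT F q ((r1 i).left j) ((r1 i).right j) (rg.right i)
      = SST A (MT A (iT (k := k) p h) (iT (k := k) q g)) := by
    have inner : ∀ i ∈ rg.index, ∑ j ∈ (r1 i).index,
        triT F q ((r1 i).left j) ((r1 i).right j) (rg.right i)
        = Coalgebra.counit (R := k) (rg.left i) •
            SST A (MT A (iT (k := k) p h) (iT (k := k) q (rg.right i))) := by
      intro i _
      calc ∑ j ∈ (r1 i).index, triT F q ((r1 i).left j) ((r1 i).right j) (rg.right i)
          = ∑ j ∈ (r1 i).index, MT A (SST A (iT (k := k) q ((r1 i).left j)))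
              (MT A (iT (k := k) q ((r1 i).right j))
                (SST A (MT A (iT (k := k) p h) (iT (k := k) q (rg.right i))))) :=
            Finset.sum_congr rfl fun j _ => hφ _ _ _
        _ = Coalgebra.counit (R := k) (rg.left i) •
              SST A (MT A (iT (k := k) p h) (iT (k := k) q (rg.right i))) :=
            Ax1T' A q (rg.left i) (r1 i) _
    calc ∑ i ∈ rg.index, ∑ j ∈ (r1 i).index,
        triT F q ((r1 i).left j) ((r1 i).right j) (rg.right i)
        = ∑ i ∈ rg.index, Coalgebra.counit (R := k) (rg.left i) •
            SST A (MT A (iT (k := k) p h) (iT (k := k) q (rg.right i))) :=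
          Finset.sum_congr rfl inner
      _ = SST A (MT A (iT (k := k) p h) (iT (k := k) q g)) := by
          rw [hgr]
          simp [map_sum, map_smul, LinearMap.sum_apply, LinearMap.smul_apply]
  rw [← stepB, key, stepA]

/-- `∑ h₁ S(h₂) = ε(h) 1` in the direct sum. -/
lemma T1sum (p : Q) (h : H p) {ι : Type*} (r : Coalgebra.Repr k h ι) :
    ∑ i ∈ r.index, MT A (iT (k := k) p (r.left i)) (SST A (iT (k := k) p (r.right i)))
      = Coalgebra.counit (R := k) h • oneT (k := k) A := by
  have key := Ax2T' A p h r (oneT (k := k) A)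
  simpa only [SST_iT, MT_oneT] using key

/-- `S(1) = 1` in the direct sum. -/
lemma SST_oneT : SST A (oneT (k := k) A) = oneT (k := k) A := by
  have key : MT A (iT (k := k) G.one A.one) (SST A (iT (k := k) G.one A.one))
      = oneT (k := k) A := by
    simpa [A.counit_one] using T1sum A G.one A.one
      ⟨({0} : Finset ℕ), fun _ => A.one, fun _ => A.one, by rw [A.comul_one]; simp⟩
  have e : MT A (iT (k := k) G.one A.one) (SST A (iT (k := k) G.one A.one))
      = SST A (iT (k := k) G.one A.one) := by
    rw [SST_iT]
    exact oneT_MT A _ _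
  exact e.symm.trans key

/-- In the commutative case, `∑ S(h₁) S(S(h₂)) = ε(h) 1` in the direct sum. -/
lemma AxAsum (hQ : ∀ p q, G.mul p q = G.mul q p)
    (hH : ∀ (p q : Q) (h : H p) (g : H q),
      gcl (k := k) (hQ p q) ((A.mul p q h) g) = (A.mul q p g) h)
    (p : Q) (h : H p) {ι : Type*} (r : Coalgebra.Repr k h ι) :
    ∑ i ∈ r.index, MT A (SST A (iT (k := k) p (r.left i)))
        (SST A (SST A (iT (k := k) p (r.right i))))
      = Coalgebra.counit (R := k) h • oneT (k := k) A := by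
  have key := congrArg (SST A) (T1sum A p h r)
  rw [map_sum, map_smul, SST_oneT] at key
  calc ∑ i ∈ r.index, MT A (SST A (iT (k := k) p (r.left i)))
        (SST A (SST A (iT (k := k) p (r.right i))))
      = ∑ i ∈ r.index, SST A (MT A (iT (k := k) p (r.left i))
          (SST A (iT (k := k) p (r.right i)))) := by
        refine Finset.sum_congr rfl fun i _ => ?_
        rw [SST_iT A p (r.right i),
          antimultT A p (G.inv p) (r.left i) (A.antipode p (r.right i)),
          SST_iT, SST_iT]
        exact commT A hQ hH _ _ _ _
    _ = Coalgebra.counit (R := k) h • oneT (k := k) A := key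

/-- `S(S(h)) = h` in the direct sum, for `H` commutative. -/
lemma SST_SST (hQ : ∀ p q, G.mul p q = G.mul q p)
    (hH : ∀ (p q : Q) (h : H p) (g : H q),
      gcl (k := k) (hQ p q) ((A.mul p q h) g) = (A.mul q p g) h)
    (p : Q) (h : H p) :
    SST A (SST A (iT (k := k) p h)) = iT (k := k) p h := by
  classical
  obtain ⟨rh⟩ : Nonempty (Coalgebra.Repr k h (H p × H p)) := ⟨Coalgebra.Repr.arbitrary k h⟩
  obtain ⟨r1⟩ : Nonempty (∀ i : (H p × H p), Coalgebra.Repr k (rh.left i) (H p × H p)) :=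
    ⟨fun i => Coalgebra.Repr.arbitrary k _⟩
  obtain ⟨r2⟩ : Nonempty (∀ i : (H p × H p), Coalgebra.Repr k (rh.right i) (H p × H p)) :=
    ⟨fun i => Coalgebra.Repr.arbitrary k _⟩
  set δ : (⨁ p, H p) →ₗ[k] ⨁ p, H p := (SST A).comp (SST A) with hδ
  set F : (⨁ p, H p) →ₗ[k] (⨁ p, H p) →ₗ[k] (⨁ p, H p) →ₗ[k] ⨁ p, H p :=
    ((LinearMap.llcomp k _ _ _).comp (MT A)).compl₂
      ((LinearMap.lcomp k _ δ).comp ((MT A).comp (SST A))) with hF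
  have hφ : ∀ a b c : H p, triT F p a b c
      = MT A (iT (k := k) p a)
          (MT A (SST A (iT (k := k) p b)) (SST A (SST A (iT (k := k) p c)))) := by
    intro a b c
    rw [triT_apply, hF]
    simp [hδ, LinearMap.llcomp_apply, LinearMap.lcomp_apply, LinearMap.compl₂_apply,
      LinearMap.comp_apply]
  have key := exchangeT (k := k) h (triT F p) rh r1 r2
  have hhl : iT (k := k) p h = ∑ i ∈ rh.index,
      Coalgebra.counit (R := k) (rh.right i) • iT (k := k) p (rh.left i) := by
    conv_lhs => rw [← sum_counit_smul_left h rh]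
    rw [map_sum]
    exact Finset.sum_congr rfl fun i _ => by rw [map_smul]
  have hhr : iT (k := k) p h = ∑ i ∈ rh.index,
      Coalgebra.counit (R := k) (rh.left i) • iT (k := k) p (rh.right i) := by
    conv_lhs => rw [← sum_counit_smul_right h rh]
    rw [map_sum]
    exact Finset.sum_congr rfl fun i _ => by rw [map_smul]
  have stepA : ∑ i ∈ rh.index, ∑ j ∈ (r2 i).index,
      triT F p (rh.left i) ((r2 i).left j) ((r2 i).right j)
      = iT (k := k) p h := by
    have inner : ∀ i ∈ rh.index, ∑ j ∈ (r2 i).index,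
        triT F p (rh.left i) ((r2 i).left j) ((r2 i).right j)
        = Coalgebra.counit (R := k) (rh.right i) • iT (k := k) p (rh.left i) := by
      intro i _
      calc ∑ j ∈ (r2 i).index, triT F p (rh.left i) ((r2 i).left j) ((r2 i).right j)
          = ∑ j ∈ (r2 i).index, MT A (iT (k := k) p (rh.left i))
              (MT A (SST A (iT (k := k) p ((r2 i).left j)))
                (SST A (SST A (iT (k := k) p ((r2 i).right j))))) :=
            Finset.sum_congr rfl fun j _ => hφ _ _ _
        _ = MT A (iT (k := k) p (rh.left i)) (∑ j ∈ (r2 i).index,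
              MT A (SST A (iT (k := k) p ((r2 i).left j)))
                (SST A (SST A (iT (k := k) p ((r2 i).right j))))) := by
            rw [map_sum]
        _ = Coalgebra.counit (R := k) (rh.right i) • iT (k := k) p (rh.left i) := by
            rw [AxAsum A hQ hH p (rh.right i) (r2 i), map_smul, MT_oneT]
    rw [Finset.sum_congr rfl inner, ← hhl]
  have stepB : ∑ i ∈ rh.index, ∑ j ∈ (r1 i).index,
      triT F p ((r1 i).left j) ((r1 i).right j) (rh.right i)
      = SST A (SST A (iT (k := k) p h)) := by
    have inner : ∀ i ∈ rh.index, ∑ j ∈ (r1 i).index,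
        triT F p ((r1 i).left j) ((r1 i).right j) (rh.right i)
        = Coalgebra.counit (R := k) (rh.left i) •
            SST A (SST A (iT (k := k) p (rh.right i))) := by
      intro i _
      calc ∑ j ∈ (r1 i).index, triT F p ((r1 i).left j) ((r1 i).right j) (rh.right i)
          = ∑ j ∈ (r1 i).index, MT A (iT (k := k) p ((r1 i).left j))
              (MT A (SST A (iT (k := k) p ((r1 i).right j)))
                (SST A (SST A (iT (k := k) p (rh.right i))))) :=
            Finset.sum_congr rfl fun j _ => hφ _ _ _
        _ = Coalgebra.counit (R := k) (rh.left i) •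
              SST A (SST A (iT (k := k) p (rh.right i))) :=
            Ax2T' A p (rh.left i) (r1 i) _
    rw [Finset.sum_congr rfl inner, hhr]
    simp [map_sum, map_smul, LinearMap.sum_apply, LinearMap.smul_apply]
  rw [← stepB, key, stepA]

end Aux

/-- If `H` is commutative then `S_{p⁻¹} ∘ S_p = id`. -/
theorem gradedHopfQuasigroup_antipode_antipode_of_commutative
    (A : GradedHopfQuasigroup k G H)
    (hQ : ∀ p q, G.mul p q = G.mul q p)
    (hH : ∀ (p q : Q) (h : H p) (g : H q),
      gcl (k := k) (hQ p q) ((A.mul p q h) g) = (A.mul q p g) h)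
    (p : Q) (h : H p) :
    gcl (k := k) (G.inv_inv p) (A.antipode (G.inv p) (A.antipode p h)) = h := by
  classical
  have main := SST_SST A hQ hH p h
  have final : iT (k := k) p (gcl (k := k) (G.inv_inv p)
      (A.antipode (G.inv p) (A.antipode p h))) = iT (k := k) p h := by
    rw [iT_gcl, ← SST_iT, ← SST_iT]
    exact main
  exact iT_inj final
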